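/- arXiv:1510.05792 — 2 statements merged into one kernel-verified Lean document; each statement's English description precedes it below -/
import Mathlib

section
/- Let X be a complex Banach space, let A, B : X → X be bounded linear operators, let U ⊆ X be a finite-dimensional subspace invariant under A (i.e., A(U) ⊆ U), and let c ∈ ℂ, r > 0, C₁, C₂ > 0, ε ≥ 0 be such that: for every z with |z − c| = r both z·id − A and z·id − B are invertible with ‖(z·id − A)⁻¹‖ ≤ C₁ and ‖(z·id − B)⁻¹‖ ≤ C₂, and ‖(A − B)x‖ ≤ ε‖x‖ for all x ∈ U. Let P_A and P_B be the Riesz projections of A and B along the circle |z − c| = r. Then for all x ∈ U, ‖(P_A − P_B)x‖ ≤ r·C₁·C₂·ε·‖x‖. -/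
open MeasureTheory Metric

/-- Apply a circle integral of an operator-valued function to a vector. -/
lemma circleIntegral_apply_aux {X : Type*} [NormedAddCommGroup X] [NormedSpace ℂ X]
    {f : ℂ → X →L[ℂ] X} {c : ℂ} {r : ℝ} (hf : CircleIntegrable f c r) (x : X) :
    (∮ z in C(c, r), f z) x = ∮ z in C(c, r), f z x := by
  have := ContinuousLinearMap.intervalIntegral_apply (μ := volume) hf.out x
  simpa [circleIntegral, ContinuousLinearMap.smul_apply] using this

/-- Invariance of a finite-dimensional invariant subspace under the inverse. -/
lemma inverse_mem_aux {X : Type*} [NormedAddCommGroup X] [NormedSpace ℂ X]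
    (T : X →L[ℂ] X) (hT : IsUnit T) (U : Submodule ℂ X) [FiniteDimensional ℂ U]
    (hU : ∀ x ∈ U, T x ∈ U) {x : X} (hx : x ∈ U) : Ring.inverse T x ∈ U := by
  have hinj : Function.Injective T := by
    intro a b hab
    have h1 : (Ring.inverse T * T) a = (Ring.inverse T * T) b := by
      simp [ContinuousLinearMap.mul_apply, hab]
    simpa [Ring.inverse_mul_cancel T hT] using h1
  set g : U →ₗ[ℂ] U := (T : X →ₗ[ℂ] X).restrict hU with hg
  have hginj : Function.Injective g := by
    intro a b hab
    have : T a = T b := congrArg Subtype.val hab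
    exact Subtype.ext (hinj this)
  have hgsurj : Function.Surjective g := (LinearMap.injective_iff_surjective).mp hginj
  obtain ⟨u, hu⟩ := hgsurj ⟨x, hx⟩
  have hTu : T u = x := congrArg Subtype.val hu
  have : Ring.inverse T (T u) = u := by
    have := congrFun (congrArg DFunLike.coe (Ring.inverse_mul_cancel T hT)) (u : X)
    simpa [ContinuousLinearMap.mul_apply] using this
  rw [← hTu, this]
  exact u.2

/-- **Restricted perturbation bound for Riesz projections (Lemma 4.2).**
Let `U` be a finite-dimensional subspace invariant under `A`, and suppose
`‖(A − B)x‖ ≤ ε‖x‖` for all `x ∈ U`. If both resolvents of `A` and `B` exist on the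
circle `|z − c| = r` with uniform bounds `C₁`, `C₂`, then the Riesz projections satisfy
`‖(P_A − P_B)x‖ ≤ r·C₁·C₂·ε·‖x‖` for all `x ∈ U`. -/
theorem stmt_13 {X : Type*} [NormedAddCommGroup X] [NormedSpace ℂ X] [CompleteSpace X]
    (A B : X →L[ℂ] X)
    (U : Submodule ℂ X) [FiniteDimensional ℂ U] (hU : ∀ x ∈ U, A x ∈ U)
    (c : ℂ) (r C₁ C₂ ε : ℝ)
    (hr : 0 < r) (hC₁ : 0 < C₁) (hC₂ : 0 < C₂) (hε : 0 ≤ ε)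
    (hA : ∀ z : ℂ, ‖z - c‖ = r → IsUnit (z • (1 : X →L[ℂ] X) - A) ∧
      ‖Ring.inverse (z • (1 : X →L[ℂ] X) - A)‖ ≤ C₁)
    (hB : ∀ z : ℂ, ‖z - c‖ = r → IsUnit (z • (1 : X →L[ℂ] X) - B) ∧
      ‖Ring.inverse (z • (1 : X →L[ℂ] X) - B)‖ ≤ C₂)
    (hAB : ∀ x ∈ U, ‖(A - B) x‖ ≤ ε * ‖x‖)
    (PA PB : X →L[ℂ] X)
    (hPA : PA = (2 * (Real.pi : ℂ) * Complex.I)⁻¹ •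
      ∮ z in C(c, r), Ring.inverse (z • (1 : X →L[ℂ] X) - A))
    (hPB : PB = (2 * (Real.pi : ℂ) * Complex.I)⁻¹ •
      ∮ z in C(c, r), Ring.inverse (z • (1 : X →L[ℂ] X) - B)) :
    ∀ x ∈ U, ‖(PA - PB) x‖ ≤ r * C₁ * C₂ * ε * ‖x‖ := by
  intro x hx
  set f : ℂ → X →L[ℂ] X := fun z => Ring.inverse (z • (1 : X →L[ℂ] X) - A) with hf
  set g : ℂ → X →L[ℂ] X := fun z => Ring.inverse (z • (1 : X →L[ℂ] X) - B) with hgdef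
  have hsphere : ∀ z ∈ sphere c r, ‖z - c‖ = r := by
    intro z hz
    simpa [Complex.dist_eq] using hz
  -- continuity of resolvents on the sphere
  have hcA : Continuous fun w : ℂ => w • (1 : X →L[ℂ] X) - A :=
    ((continuous_id.smul continuous_const).sub continuous_const)
  have hcB : Continuous fun w : ℂ => w • (1 : X →L[ℂ] X) - B :=
    ((continuous_id.smul continuous_const).sub continuous_const)
  have hcontA : ContinuousOn f (sphere c r) := by
    intro z hz
    obtain ⟨u, hu⟩ := (hA z (hsphere z hz)).1
    have h1 : ContinuousAt Ring.inverse (z • (1 : X →L[ℂ] X) - A) :=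
      hu ▸ NormedRing.inverse_continuousAt u
    have h2 : ContinuousAt (fun w : ℂ => Ring.inverse (w • (1 : X →L[ℂ] X) - A)) z :=
      ContinuousAt.comp (g := Ring.inverse) (x := z) h1 hcA.continuousAt
    exact h2.continuousWithinAt
  have hcontB : ContinuousOn g (sphere c r) := by
    intro z hz
    obtain ⟨u, hu⟩ := (hB z (hsphere z hz)).1
    have h1 : ContinuousAt Ring.inverse (z • (1 : X →L[ℂ] X) - B) :=
      hu ▸ NormedRing.inverse_continuousAt u
    have h2 : ContinuousAt (fun w : ℂ => Ring.inverse (w • (1 : X →L[ℂ] X) - B)) z :=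
      ContinuousAt.comp (g := Ring.inverse) (x := z) h1 hcB.continuousAt
    exact h2.continuousWithinAt
  have hiA : CircleIntegrable f c r := hcontA.circleIntegrable hr.le
  have hiB : CircleIntegrable g c r := hcontB.circleIntegrable hr.le
  have hiAx : CircleIntegrable (fun z => f z x) c r :=
    ((ContinuousLinearMap.apply ℂ X x).continuous.comp_continuousOn
      hcontA).circleIntegrable hr.le
  have hiBx : CircleIntegrable (fun z => g z x) c r :=
    ((ContinuousLinearMap.apply ℂ X x).continuous.comp_continuousOn
      hcontB).circleIntegrable hr.le
  -- key pointwise expression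
  have key : (PA - PB) x = (2 * (Real.pi : ℂ) * Complex.I)⁻¹ •
      ∮ z in C(c, r), (f z x - g z x) := by
    rw [hPA, hPB, ← smul_sub, ContinuousLinearMap.smul_apply, ContinuousLinearMap.sub_apply,
      circleIntegral_apply_aux hiA, circleIntegral_apply_aux hiB,
      ← circleIntegral.integral_sub hiAx hiBx]
  -- pointwise norm bound on the sphere
  have hbound : ∀ z ∈ sphere c r, ‖f z x - g z x‖ ≤ C₂ * (ε * (C₁ * ‖x‖)) := by
    intro z hz
    have hz' := hsphere z hz
    obtain ⟨huA, hnA⟩ := hA z hz'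
    obtain ⟨huB, hnB⟩ := hB z hz'
    -- resolvent identity: f z - g z = g z * (A - B) * f z
    have hres : f z - g z = g z * (A - B) * f z := by
      have h1 : g z * (z • (1 : X →L[ℂ] X) - B) = 1 := Ring.inverse_mul_cancel _ huB
      have h2 : (z • (1 : X →L[ℂ] X) - A) * f z = 1 := Ring.mul_inverse_cancel _ huA
      have e1 : g z * ((z • (1 : X →L[ℂ] X) - B) * f z) = f z := by
        rw [← mul_assoc, h1, one_mul]
      have e2 : g z * ((z • (1 : X →L[ℂ] X) - A) * f z) = g z := by
        rw [h2, mul_one]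
      have e3 : (z • (1 : X →L[ℂ] X) - B) - (z • (1 : X →L[ℂ] X) - A) = A - B := by abel
      calc f z - g z = g z * ((z • (1 : X →L[ℂ] X) - B) * f z)
            - g z * ((z • (1 : X →L[ℂ] X) - A) * f z) := by rw [e1, e2]
        _ = g z * (((z • (1 : X →L[ℂ] X) - B) - (z • (1 : X →L[ℂ] X) - A)) * f z) := by
            rw [← mul_sub, ← sub_mul]
        _ = g z * (A - B) * f z := by rw [e3, ← mul_assoc]
    have hfx : f z x ∈ U := inverse_mem_aux _ huA U (fun y hy => by
      simpa [sub_smul] using U.sub_mem (U.smul_mem z hy) (hU y hy)) hx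
    have e1 : f z x - g z x = g z ((A - B) (f z x)) := by
      have := congrFun (congrArg DFunLike.coe hres) x
      simpa [ContinuousLinearMap.mul_apply] using this
    rw [e1]
    calc ‖g z ((A - B) (f z x))‖ ≤ ‖g z‖ * ‖(A - B) (f z x)‖ := (g z).le_opNorm _
      _ ≤ C₂ * (ε * ‖f z x‖) := by
          apply mul_le_mul hnB (hAB _ hfx) (norm_nonneg _) hC₂.le
      _ ≤ C₂ * (ε * (C₁ * ‖x‖)) := by
          gcongr
          calc ‖f z x‖ ≤ ‖f z‖ * ‖x‖ := (f z).le_opNorm x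
            _ ≤ C₁ * ‖x‖ := by gcongr
  -- now combine
  have hint : ‖∮ z in C(c, r), (f z x - g z x)‖ ≤
      2 * Real.pi * r * (C₂ * (ε * (C₁ * ‖x‖))) :=
    circleIntegral.norm_integral_le_of_norm_le_const hr.le hbound
  rw [key, norm_smul]
  have hnc : ‖(2 * (Real.pi : ℂ) * Complex.I)⁻¹‖ = (2 * Real.pi)⁻¹ := by
    simp [norm_inv, abs_of_nonneg Real.pi_nonneg, Real.pi_nonneg]
  rw [hnc]
  calc (2 * Real.pi)⁻¹ * ‖∮ z in C(c, r), (f z x - g z x)‖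
      ≤ (2 * Real.pi)⁻¹ * (2 * Real.pi * r * (C₂ * (ε * (C₁ * ‖x‖)))) := by
        gcongr
    _ = r * C₁ * C₂ * ε * ‖x‖ := by
        have h2pi : (2 * Real.pi) ≠ 0 := by positivity
        field_simp
end

section
/- Let H be a real or complex Hilbert space and let M and N be finite-dimensional subspaces of H with dim M = dim N. If δ(M, N) < 1, then δ(N, M) = δ(M, N), where δ(M, N) := sup_{x ∈ M, ‖x‖ = 1} dist(x, N) (and δ := 0 if M = {0}). In particular the gap δ̂(M, N) := max(δ(M, N), δ(N, M)) equals δ(M, N). -/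
/-- The directed gap `δ(M, N) := sup_{x ∈ M, ‖x‖ = 1} dist(x, N)` between two subspaces
of a normed space (equal to `0` when `M = {0}`, since `Real.sSup ∅ = 0`). -/
noncomputable def subGap {𝕜 X : Type*} [RCLike 𝕜] [NormedAddCommGroup X]
    [NormedSpace 𝕜 X] (M N : Submodule 𝕜 X) : ℝ :=
  sSup ((fun x => Metric.infDist x (N : Set X)) '' {x : X | x ∈ M ∧ ‖x‖ = 1})

open Module Metric ContinuousLinearMap Submodule
open scoped InnerProductSpace

section Aux

variable {𝕜 H : Type*} [RCLike 𝕜] [NormedAddCommGroup H] [InnerProductSpace 𝕜 H]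

lemma subGap_infDist_eq (N : Submodule 𝕜 H) [HasOrthogonalProjection N] (x : H) :
    Metric.infDist x (N : Set H) = ‖x - orthogonalProjection N x‖ := by
  have e : ‖x - (orthogonalProjection N x : H)‖ = ⨅ y : N, ‖x - y‖ := starProjection_minimal x
  rw [Metric.infDist_eq_iInf, e]
  simp only [dist_eq_norm]
  rfl

lemma subGap_infDist_sqrt (N : Submodule 𝕜 H) [HasOrthogonalProjection N] {x : H}
    (hx : ‖x‖ = 1) :
    Metric.infDist x (N : Set H) =
      Real.sqrt (1 - ‖(orthogonalProjection N x : H)‖ ^ 2) := by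
  rw [subGap_infDist_eq]
  have h1 : ‖x‖ ^ 2 = ‖orthogonalProjection N x‖ ^ 2 + ‖orthogonalProjection Nᗮ x‖ ^ 2 :=
    norm_sq_eq_add_norm_sq_projection x N
  have h2 : ((orthogonalProjection Nᗮ x : H)) = x - orthogonalProjection N x := by
    rw [orthogonalProjection_orthogonal]; rfl
  have h3 : ‖(orthogonalProjection N x : H)‖ = ‖orthogonalProjection N x‖ := rfl
  have h4 : ‖orthogonalProjection Nᗮ x‖ = ‖x - (orthogonalProjection N x : H)‖ := by
    rw [← h2]; rfl
  have h5 : ‖x - (orthogonalProjection N x : H)‖ ^ 2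
      = 1 - ‖(orthogonalProjection N x : H)‖ ^ 2 := by
    rw [h3]; rw [hx] at h1; rw [h4] at h1; nlinarith
  rw [← h5, Real.sqrt_sq (norm_nonneg _)]

lemma sphere_set_eq (M : Submodule 𝕜 H) :
    {x : H | x ∈ M ∧ ‖x‖ = 1} = Subtype.val '' (Metric.sphere (0 : M) 1) := by
  ext x
  constructor
  · rintro ⟨hx, hn⟩
    exact ⟨⟨x, hx⟩, by simp [mem_sphere_iff_norm, hn], rfl⟩
  · rintro ⟨m, hm, rfl⟩
    simp only [mem_sphere_iff_norm, sub_zero] at hm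
    exact ⟨m.2, hm⟩

/-- The minimal norm of the orthogonal projection onto `N` over the unit sphere of `M`. -/
noncomputable def minP (M N : Submodule 𝕜 H) [HasOrthogonalProjection N] : ℝ :=
  sInf ((fun m : M => ‖(orthogonalProjection N (m : H) : H)‖) '' Metric.sphere 0 1)

lemma minP_spec (M N : Submodule 𝕜 H) [FiniteDimensional 𝕜 M] [HasOrthogonalProjection N]
    (hM : M ≠ ⊥) :
    (∃ m : M, ‖m‖ = 1 ∧ ‖(orthogonalProjection N (m : H) : H)‖ = minP M N) ∧
      ∀ m : M, ‖m‖ = 1 → minP M N ≤ ‖(orthogonalProjection N (m : H) : H)‖ := by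
  haveI : ProperSpace M := FiniteDimensional.proper 𝕜 M
  obtain ⟨m, hm0⟩ := (Submodule.ne_bot_iff M).mp hM
  have hmne : (⟨m, hm0.1⟩ : M) ≠ 0 := by
    simp only [ne_eq, Submodule.mk_eq_zero]; exact hm0.2
  have hne : (Metric.sphere (0 : M) 1).Nonempty := by
    refine ⟨(‖(⟨m, hm0.1⟩ : M)‖ : 𝕜)⁻¹ • ⟨m, hm0.1⟩, ?_⟩
    have h0 : ‖(⟨m, hm0.1⟩ : M)‖ ≠ 0 := norm_ne_zero_iff.mpr hmne
    have h0' : ‖m‖ ≠ 0 := h0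
    simp [mem_sphere_iff_norm, norm_smul, h0', inv_mul_cancel₀ h0']
  have hcont : Continuous fun m : M => ‖(orthogonalProjection N (m : H) : H)‖ :=
    (continuous_subtype_val.comp
      ((orthogonalProjection N).continuous.comp continuous_subtype_val)).norm
  obtain ⟨m₀, hm₀s, heq, hle⟩ :=
    (isCompact_sphere (0 : M) 1).exists_sInf_image_eq_and_le hne hcont.continuousOn
  simp only [mem_sphere_iff_norm, sub_zero] at hm₀s
  refine ⟨⟨m₀, hm₀s, heq.symm⟩, fun m hm => ?_⟩
  exact heq.trans_le (hle m (by simp [mem_sphere_iff_norm, hm]))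

lemma minP_nonneg (M N : Submodule 𝕜 H) [FiniteDimensional 𝕜 M] [HasOrthogonalProjection N]
    (hM : M ≠ ⊥) : 0 ≤ minP M N := by
  obtain ⟨⟨m, hm, hEq⟩, _⟩ := minP_spec M N hM
  rw [← hEq]; exact norm_nonneg _

lemma subGap_eq_sqrt (M N : Submodule 𝕜 H) [FiniteDimensional 𝕜 M] [HasOrthogonalProjection N]
    (hM : M ≠ ⊥) :
    subGap M N = Real.sqrt (1 - (minP M N) ^ 2) := by
  obtain ⟨⟨m₀, hm₀, hEq⟩, hle⟩ := minP_spec M N hM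
  have hnorm : ∀ m : M, ‖(m : H)‖ = ‖m‖ := fun m => rfl
  have himg : (fun x => Metric.infDist x (N : Set H)) '' {x : H | x ∈ M ∧ ‖x‖ = 1}
      = (fun m : M => Metric.infDist (m : H) (N : Set H)) '' Metric.sphere 0 1 := by
    rw [sphere_set_eq, Set.image_image]
  rw [subGap, himg]
  apply le_antisymm
  · apply Real.sSup_le
    · rintro v ⟨m, hm, rfl⟩
      simp only [mem_sphere_iff_norm, sub_zero] at hm
      show Metric.infDist (m : H) (N : Set H) ≤ _
      rw [subGap_infDist_sqrt N (by rw [hnorm]; exact hm)]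
      apply Real.sqrt_le_sqrt
      have h1 := hle m hm
      have h2 := minP_nonneg M N hM
      nlinarith
    · exact Real.sqrt_nonneg _
  · have hmem : Real.sqrt (1 - (minP M N) ^ 2)
        ∈ (fun m : M => Metric.infDist (m : H) (N : Set H)) '' Metric.sphere 0 1 := by
      refine ⟨m₀, by simp [mem_sphere_iff_norm, hm₀], ?_⟩
      show Metric.infDist (m₀ : H) (N : Set H) = _
      rw [subGap_infDist_sqrt N (by rw [hnorm]; exact hm₀), hEq]
    apply le_csSup _ hmem
    refine ⟨1, ?_⟩
    rintro v ⟨m, hm, rfl⟩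
    simp only [mem_sphere_iff_norm, sub_zero] at hm
    calc Metric.infDist (m : H) (N : Set H) ≤ dist (m : H) (0 : H) := by
          apply Metric.infDist_le_dist_of_mem; exact N.zero_mem
      _ = 1 := by rw [dist_zero_right, hnorm, hm]

lemma adjoint_proj (M N : Submodule 𝕜 H) [CompleteSpace M] [CompleteSpace N] :
    (orthogonalProjection M).comp N.subtypeL
      = ContinuousLinearMap.adjoint ((orthogonalProjection N).comp M.subtypeL) := by
  rw [ContinuousLinearMap.eq_adjoint_iff]
  intro x y
  simp only [ContinuousLinearMap.comp_apply, Submodule.subtypeL_apply]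
  rw [inner_orthogonalProjection_eq_of_mem_right, inner_orthogonalProjection_eq_of_mem_left]

lemma adjoint_lower {E F : Type*} [NormedAddCommGroup E] [InnerProductSpace 𝕜 E]
    [NormedAddCommGroup F] [InnerProductSpace 𝕜 F] [FiniteDimensional 𝕜 E]
    [FiniteDimensional 𝕜 F] [CompleteSpace E] [CompleteSpace F] (hdim : finrank 𝕜 E = finrank 𝕜 F) (A : E →L[𝕜] F) {c : ℝ}
    (hc : 0 < c) (hA : ∀ x : E, c * ‖x‖ ≤ ‖A x‖) (y : F) :
    c * ‖y‖ ≤ ‖ContinuousLinearMap.adjoint A y‖ := by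
  rcases eq_or_ne y 0 with rfl | hy
  · simp
  have hinj : Function.Injective A := by
    intro a b hab
    by_contra hne
    have h1 := hA (a - b)
    have h2 : A (a - b) = 0 := by rw [map_sub, hab, sub_self]
    rw [h2, norm_zero] at h1
    have h3 : (0:ℝ) < ‖a - b‖ := norm_pos_iff.mpr (sub_ne_zero_of_ne hne)
    nlinarith
  have hsurj : Function.Surjective A :=
    (LinearMap.injective_iff_surjective_of_finrank_eq_finrank (f := (A : E →ₗ[𝕜] F)) hdim).mp hinj
  obtain ⟨z, hz⟩ := hsurj y
  have key : ‖y‖ ^ 2 ≤ ‖z‖ * ‖ContinuousLinearMap.adjoint A y‖ := by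
    have h1 : ‖y‖ ^ 2 = RCLike.re (⟪y, y⟫_𝕜) := (inner_self_eq_norm_sq y).symm
    have h2 : (⟪y, y⟫_𝕜) = ⟪z, ContinuousLinearMap.adjoint A y⟫_𝕜 := by
      rw [ContinuousLinearMap.adjoint_inner_right, hz]
    calc ‖y‖ ^ 2 = RCLike.re (⟪z, ContinuousLinearMap.adjoint A y⟫_𝕜) := by rw [h1, h2]
      _ ≤ ‖(⟪z, ContinuousLinearMap.adjoint A y⟫_𝕜)‖ := RCLike.re_le_norm _
      _ ≤ ‖z‖ * ‖ContinuousLinearMap.adjoint A y‖ := norm_inner_le_norm _ _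
  have hz' : c * ‖z‖ ≤ ‖y‖ := by rw [← hz]; exact hA z
  have hypos : (0 : ℝ) < ‖y‖ := norm_pos_iff.mpr hy
  have hadn : (0 : ℝ) ≤ ‖ContinuousLinearMap.adjoint A y‖ := norm_nonneg _
  nlinarith [mul_le_mul_of_nonneg_right hz' hadn]

end Aux

/-- **Symmetry of the gap for equal-dimensional subspaces (Kato).**
Let `H` be a real or complex Hilbert space and `M, N` finite-dimensional subspaces with
`dim M = dim N`. If `δ(M, N) < 1` then `δ(N, M) = δ(M, N)`; in particular the gap
`δ̂(M, N) = max(δ(M, N), δ(N, M))` equals `δ(M, N)`. -/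
theorem stmt_17 {𝕜 H : Type*} [RCLike 𝕜] [NormedAddCommGroup H] [InnerProductSpace 𝕜 H]
    (M N : Submodule 𝕜 H) [FiniteDimensional 𝕜 M] [FiniteDimensional 𝕜 N]
    (hdim : Module.finrank 𝕜 M = Module.finrank 𝕜 N)
    (h : subGap M N < 1) :
    subGap N M = subGap M N ∧ max (subGap M N) (subGap N M) = subGap M N := by
  haveI := FiniteDimensional.complete 𝕜 M
  haveI := FiniteDimensional.complete 𝕜 N
  by_cases hM : M = ⊥
  · have hN : N = ⊥ := by
      have : Module.finrank 𝕜 N = 0 := by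
        rw [← hdim, hM]; simp
      exact Submodule.finrank_eq_zero.mp this
    subst hM; subst hN
    have hempty : {x : H | x ∈ (⊥ : Submodule 𝕜 H) ∧ ‖x‖ = 1} = ∅ := by
      ext x; simp only [Set.mem_setOf_eq, Submodule.mem_bot, Set.mem_empty_iff_false,
        iff_false, not_and]
      rintro rfl; simp
    have : subGap (⊥ : Submodule 𝕜 H) (⊥ : Submodule 𝕜 H) = 0 := by
      rw [subGap, hempty, Set.image_empty, Real.sSup_empty]
    rw [this]; simp
  · have hN : N ≠ ⊥ := by
      intro hN
      apply hM
      apply Submodule.finrank_eq_zero.mp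
      rw [hdim, hN]; simp
    set c := minP M N with hc_def
    set c' := minP N M with hc'_def
    have hδ : subGap M N = Real.sqrt (1 - c ^ 2) := subGap_eq_sqrt M N hM
    have hδ' : subGap N M = Real.sqrt (1 - c' ^ 2) := subGap_eq_sqrt N M hN
    obtain ⟨⟨m₀, hm₀, hm₀eq⟩, hMle⟩ := minP_spec M N hM
    obtain ⟨⟨n₀, hn₀, hn₀eq⟩, hNle⟩ := minP_spec N M hN
    have hc0 : 0 ≤ c := minP_nonneg M N hM
    have hcpos : 0 < c := by
      rcases hc0.lt_or_eq with h' | h'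
      · exact h'
      · exfalso
        rw [hδ, ← h'] at h
        simp at h
    -- lower bound for A = P_N ∘ incl_M
    set A := (orthogonalProjection N).comp M.subtypeL with hA_def
    have hnormcoe : ∀ m : M, ‖(m : H)‖ = ‖m‖ := fun m => rfl
    have hlow : ∀ x : M, c * ‖x‖ ≤ ‖A x‖ := by
      intro x
      rcases eq_or_ne x 0 with rfl | hx
      · simp
      · have hxn : ‖x‖ ≠ 0 := norm_ne_zero_iff.mpr hx
        obtain ⟨u, hu, hxu⟩ : ∃ u : M, ‖u‖ = 1 ∧ x = (‖x‖ : 𝕜) • u := by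
          refine ⟨(‖x‖ : 𝕜)⁻¹ • x, ?_, ?_⟩
          · rw [norm_smul, norm_inv, RCLike.norm_ofReal, abs_of_nonneg (norm_nonneg x),
              inv_mul_cancel₀ hxn]
          · rw [smul_smul, mul_inv_cancel₀ (by exact_mod_cast hxn), one_smul]
        have h1 : c ≤ ‖A u‖ := hMle u hu
        calc c * ‖x‖ = ‖x‖ * c := mul_comm _ _
          _ ≤ ‖x‖ * ‖A u‖ := mul_le_mul_of_nonneg_left h1 (norm_nonneg x)
          _ = ‖A ((‖x‖ : 𝕜) • u)‖ := by
              rw [map_smul, norm_smul, RCLike.norm_ofReal, abs_of_nonneg (norm_nonneg x)]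
          _ = ‖A x‖ := by rw [← hxu]
    have hadj : (orthogonalProjection M).comp N.subtypeL = ContinuousLinearMap.adjoint A :=
      adjoint_proj M N
    -- c ≤ c'
    have hcc' : c ≤ c' := by
      have := adjoint_lower hdim A hcpos hlow n₀
      rw [← hadj] at this
      have h4 : ‖(orthogonalProjection M ((n₀ : N) : H) : H)‖ = c' := hn₀eq
      calc c = c * ‖n₀‖ := by rw [hn₀, mul_one]
        _ ≤ ‖((orthogonalProjection M).comp N.subtypeL) n₀‖ := this
        _ = c' := h4
    have hc'pos : 0 < c' := lt_of_lt_of_le hcpos hcc'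
    -- reverse: lower bound for A' = P_M ∘ incl_N
    set A' := (orthogonalProjection M).comp N.subtypeL with hA'_def
    have hlow' : ∀ y : N, c' * ‖y‖ ≤ ‖A' y‖ := by
      intro y
      rcases eq_or_ne y 0 with rfl | hy
      · simp
      · have hyn : ‖y‖ ≠ 0 := norm_ne_zero_iff.mpr hy
        obtain ⟨u, hu, hyu⟩ : ∃ u : N, ‖u‖ = 1 ∧ y = (‖y‖ : 𝕜) • u := by
          refine ⟨(‖y‖ : 𝕜)⁻¹ • y, ?_, ?_⟩
          · rw [norm_smul, norm_inv, RCLike.norm_ofReal, abs_of_nonneg (norm_nonneg y),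
              inv_mul_cancel₀ hyn]
          · rw [smul_smul, mul_inv_cancel₀ (by exact_mod_cast hyn), one_smul]
        have h1 : c' ≤ ‖A' u‖ := hNle u hu
        calc c' * ‖y‖ = ‖y‖ * c' := mul_comm _ _
          _ ≤ ‖y‖ * ‖A' u‖ := mul_le_mul_of_nonneg_left h1 (norm_nonneg y)
          _ = ‖A' ((‖y‖ : 𝕜) • u)‖ := by
              rw [map_smul, norm_smul, RCLike.norm_ofReal, abs_of_nonneg (norm_nonneg y)]
          _ = ‖A' y‖ := by rw [← hyu]
    have hadj' : ContinuousLinearMap.adjoint A' = A :=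
      (congrArg ContinuousLinearMap.adjoint hadj).trans (ContinuousLinearMap.adjoint_adjoint A)
    have hc'c : c' ≤ c := by
      have := adjoint_lower hdim.symm A' hc'pos hlow' m₀
      rw [hadj'] at this
      calc c' = c' * ‖m₀‖ := by rw [hm₀, mul_one]
        _ ≤ ‖A m₀‖ := this
        _ = c := hm₀eq
    have hcc : c = c' := le_antisymm hcc' hc'c
    have hgap : subGap N M = subGap M N := by rw [hδ, hδ', hcc]
    exact ⟨hgap, by rw [hgap, max_self]⟩
end
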